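/- In the setting described (regular moment sequences m₀ of order s₀ > 0 and m₁,...,m_N of orders s₁,...,s_N ≥ 1, polynomial nonlinearity P with analytic coefficients, analytic initial data φ₀,...,φ_{κ−1}, inhomogeneity f̃ with analytic coefficients, and the Assumption Σ_{ℓ=1}^n rℓ iℓ − v_{i,q,r} < κ for all tuples), the Cauchy problem ∂_{m₀;t}^κ u − P(t,x,(∂_{m₀;t}^i ∂_{m;x}^q u)) = f̃(t,x), ∂_{m₀;t}^j u|_{t=0} = φ_j (0 ≤ j < κ), is formally well-posed: it admits a unique formal power series solution ũ(t,x) = Σ_{j≥0} u_j(x) t^j/m₀(j), and all its coefficients u_j are analytic on the full polydisc D_{ρ₁,...,ρ_N}. -/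

import Mathlib

/-- A regular moment sequence of order `s > 0`. -/
def IsRegularMomentSeq (m : ℕ → ℝ) (s : ℝ) : Prop :=
  m 0 = 1 ∧ (∀ j, 0 < m j) ∧
    ∃ a A : ℝ, 0 < a ∧ 0 < A ∧ ∀ j : ℕ,
      a * ((j : ℝ) + 1) ^ s ≤ m (j + 1) / m j ∧ m (j + 1) / m j ≤ A * ((j : ℝ) + 1) ^ s

/-- A monomial `t^v a(t,x) ∏_{ℓ=1}^n (∂_{m₀;t}^{iℓ}∂_{m;x}^{qℓ}u)^{rℓ}` of the nonlinearity,
recorded through its combinatorial data. -/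
structure MomentMonomial (N κ : ℕ) where
  n : ℕ
  npos : 0 < n
  i : Fin n → ℕ
  i_lt : ∀ ℓ, i ℓ < κ
  q : Fin n → Fin N → ℕ
  r : Fin n → ℕ
  r_pos : ∀ ℓ, 0 < r ℓ
  v : ℕ

/-- Taylor coefficients of an analytic function on the polydisc `D_{ρ₁,...,ρ_N}`. -/
def AnalyticCoeffs {N : ℕ} (ρ : Fin N → ℝ) (f : (Fin N → ℕ) → ℂ) : Prop :=
  ∀ r : Fin N → ℝ, (∀ d, 0 ≤ r d) → (∀ d, r d < ρ d) →
    Summable fun J : Fin N → ℕ => ‖f J‖ * ∏ d, r d ^ J d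

/-- Cauchy product of Taylor coefficient families in the space variables. -/
noncomputable def coeffMul {N : ℕ} (f g : (Fin N → ℕ) → ℂ) : (Fin N → ℕ) → ℂ :=
  fun J => ∑ K ∈ Finset.Iic J, f K * g (J - K)

/-- A formal series `Σ_j u_j(x) t^j/m₀(j)` is represented by the family `U` of the Taylor
coefficients of its coefficients `u_j`.  `tmul` is the representation of the ordinary
product of two such series:
`(U·V)_j = Σ_{k=0}^{j} (m₀(j)/(m₀(k)m₀(j−k))) u_k v_{j−k}`. -/
noncomputable def tmul (N : ℕ) (m₀ : ℕ → ℝ) (U V : ℕ → (Fin N → ℕ) → ℂ) :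
    ℕ → (Fin N → ℕ) → ℂ :=
  fun j J => ∑ k ∈ Finset.range (j + 1),
    ((m₀ j / (m₀ k * m₀ (j - k)) : ℝ) : ℂ) * coeffMul (U k) (V (j - k)) J

/-- The constant series `1`. -/
noncomputable def sOne (N : ℕ) : ℕ → (Fin N → ℕ) → ℂ :=
  fun j J => if j = 0 ∧ J = 0 then 1 else 0

/-- Finite products of formal series. -/
noncomputable def sProd (N : ℕ) (m₀ : ℕ → ℝ) :
    (n : ℕ) → (Fin n → ℕ → (Fin N → ℕ) → ℂ) → ℕ → (Fin N → ℕ) → ℂ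
  | 0, _ => sOne N
  | n + 1, F => tmul N m₀ (F 0) (sProd N m₀ n fun k => F k.succ)

/-- `p`-th power of a formal series. -/
noncomputable def spow (N : ℕ) (m₀ : ℕ → ℝ) (p : ℕ) (U : ℕ → (Fin N → ℕ) → ℂ) :
    ℕ → (Fin N → ℕ) → ℂ :=
  sProd N m₀ p fun _ => U

/-- Multiplication by `t^v`. -/
noncomputable def tpowMul (N : ℕ) (m₀ : ℕ → ℝ) (v : ℕ) (U : ℕ → (Fin N → ℕ) → ℂ) :
    ℕ → (Fin N → ℕ) → ℂ :=
  fun j J => if v ≤ j then ((m₀ j / m₀ (j - v) : ℝ) : ℂ) * U (j - v) J else 0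

/-- The iterated moment derivative `∂_{m;x}^q`, acting coefficientwise. -/
noncomputable def momentDerivQ {N : ℕ} (m : Fin N → ℕ → ℝ) (q : Fin N → ℕ)
    (f : (Fin N → ℕ) → ℂ) : (Fin N → ℕ) → ℂ :=
  fun J => f (J + q) * ((∏ d, m d (J d + q d) / m d (J d) : ℝ) : ℂ)

/-- The nonlinearity
`P(t,x,(∂_{m₀;t}^i∂_{m;x}^q u)) = Σ_τ t^{v_τ} a_τ(t,x) ∏_ℓ (∂_{m₀;t}^{iℓ}∂_{m;x}^{qℓ}u)^{rℓ}`,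
applied to the formal series represented by `U`. -/
noncomputable def Papp (N κ : ℕ) (m₀ : ℕ → ℝ) (m : Fin N → ℕ → ℝ)
    (ι : Type) [Fintype ι] (M : ι → MomentMonomial N κ)
    (A : ι → ℕ → (Fin N → ℕ) → ℂ) (U : ℕ → (Fin N → ℕ) → ℂ) :
    ℕ → (Fin N → ℕ) → ℂ :=
  fun j J => ∑ τ : ι,
    tpowMul N m₀ (M τ).v
      (tmul N m₀ (A τ)
        (sProd N m₀ (M τ).n fun ℓ =>
          spow N m₀ ((M τ).r ℓ) fun j' =>
            momentDerivQ m ((M τ).q ℓ) (U (j' + (M τ).i ℓ)))) j J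

/-- `U` represents a formal solution of the Cauchy problem
`∂_{m₀;t}^κ u − P(t,x,(∂_{m₀;t}^i∂_{m;x}^q u)) = f̃`, `∂_{m₀;t}^j u|_{t=0} = φ_j`. -/
def SolvesEq (N κ : ℕ) (m₀ : ℕ → ℝ) (m : Fin N → ℕ → ℝ)
    (ι : Type) [Fintype ι] (M : ι → MomentMonomial N κ)
    (A : ι → ℕ → (Fin N → ℕ) → ℂ) (F : ℕ → (Fin N → ℕ) → ℂ)
    (φ : Fin κ → (Fin N → ℕ) → ℂ) (U : ℕ → (Fin N → ℕ) → ℂ) : Prop :=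
  (∀ j : Fin κ, U j = φ j) ∧
  ∀ j : ℕ, U (j + κ) = fun J => Papp N κ m₀ m ι M A U j J + F j J

section Congr

variable {N : ℕ}

lemma tmul_congr {m₀ : ℕ → ℝ} {U U' V V' : ℕ → (Fin N → ℕ) → ℂ} {j : ℕ}
    (hU : ∀ k ≤ j, U k = U' k) (hV : ∀ k ≤ j, V k = V' k) :
    tmul N m₀ U V j = tmul N m₀ U' V' j := by
  funext J
  unfold tmul
  refine Finset.sum_congr rfl fun k hk => ?_
  have hk' : k ≤ j := Nat.lt_succ_iff.mp (Finset.mem_range.mp hk)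
  rw [hU k hk', hV (j - k) (Nat.sub_le _ _)]

lemma sProd_congr {m₀ : ℕ → ℝ} {j : ℕ} : ∀ {n : ℕ} {F G : Fin n → ℕ → (Fin N → ℕ) → ℂ},
    (∀ ℓ k, k ≤ j → F ℓ k = G ℓ k) → ∀ k ≤ j, sProd N m₀ n F k = sProd N m₀ n G k := by
  intro n
  induction n with
  | zero => intro F G _ k _; rfl
  | succ n ih =>
    intro F G h k hk
    show tmul N m₀ (F 0) _ k = tmul N m₀ (G 0) _ k
    exact tmul_congr (fun k' hk' => h 0 k' (hk'.trans hk))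
      (fun k' hk' => ih (fun ℓ k'' hk'' => h ℓ.succ k'' hk'') k' (hk'.trans hk))

end Congr
section Exist

variable {N : ℕ}

lemma Papp_congr {κ : ℕ} {m₀ : ℕ → ℝ} {m : Fin N → ℕ → ℝ} {ι : Type} [Fintype ι]
    {M : ι → MomentMonomial N κ} {A : ι → ℕ → (Fin N → ℕ) → ℂ}
    {U V : ℕ → (Fin N → ℕ) → ℂ} {j : ℕ}
    (h : ∀ k, k < j + κ → U k = V k) :
    Papp N κ m₀ m ι M A U j = Papp N κ m₀ m ι M A V j := by
  funext J
  unfold Papp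
  refine Finset.sum_congr rfl fun τ _ => ?_
  have base : ∀ ℓ : Fin (M τ).n, ∀ k ≤ j,
      (fun j' => momentDerivQ m ((M τ).q ℓ) (U (j' + (M τ).i ℓ))) k
        = (fun j' => momentDerivQ m ((M τ).q ℓ) (V (j' + (M τ).i ℓ))) k := by
    intro ℓ k hk
    have hi := (M τ).i_lt ℓ
    simp only
    rw [h (k + (M τ).i ℓ) (by omega)]
  have pw : ∀ ℓ : Fin (M τ).n, ∀ k ≤ j,
      spow N m₀ ((M τ).r ℓ) (fun j' => momentDerivQ m ((M τ).q ℓ) (U (j' + (M τ).i ℓ))) k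
        = spow N m₀ ((M τ).r ℓ) (fun j' => momentDerivQ m ((M τ).q ℓ) (V (j' + (M τ).i ℓ))) k := by
    intro ℓ k hk
    exact sProd_congr (fun _ k' hk' => base ℓ k' hk') k hk
  have sp : ∀ k ≤ j,
      sProd N m₀ (M τ).n (fun ℓ => spow N m₀ ((M τ).r ℓ)
        fun j' => momentDerivQ m ((M τ).q ℓ) (U (j' + (M τ).i ℓ))) k
      = sProd N m₀ (M τ).n (fun ℓ => spow N m₀ ((M τ).r ℓ)
        fun j' => momentDerivQ m ((M τ).q ℓ) (V (j' + (M τ).i ℓ))) k :=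
    sProd_congr pw
  have key : ∀ k ≤ j,
      tmul N m₀ (A τ) (sProd N m₀ (M τ).n fun ℓ => spow N m₀ ((M τ).r ℓ)
        fun j' => momentDerivQ m ((M τ).q ℓ) (U (j' + (M τ).i ℓ))) k
      = tmul N m₀ (A τ) (sProd N m₀ (M τ).n fun ℓ => spow N m₀ ((M τ).r ℓ)
        fun j' => momentDerivQ m ((M τ).q ℓ) (V (j' + (M τ).i ℓ))) k := by
    intro k hk
    exact tmul_congr (fun _ _ => rfl) (fun k' hk' => sp k' (hk'.trans hk))
  unfold tpowMul
  by_cases hv : (M τ).v ≤ j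
  · rw [if_pos hv, if_pos hv, key (j - (M τ).v) (Nat.sub_le _ _)]
  · rw [if_neg hv, if_neg hv]

end Exist

noncomputable def sol (N κ : ℕ) (m₀ : ℕ → ℝ) (m : Fin N → ℕ → ℝ) (ι : Type) [Fintype ι]
    (M : ι → MomentMonomial N κ) (A : ι → ℕ → (Fin N → ℕ) → ℂ)
    (F : ℕ → (Fin N → ℕ) → ℂ) (φ : Fin κ → (Fin N → ℕ) → ℂ) (j : ℕ) :
    (Fin N → ℕ) → ℂ :=
  if h : j < κ then φ ⟨j, h⟩
  else fun J => Papp N κ m₀ m ι M A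
      (fun k => if hk : k < j then sol N κ m₀ m ι M A F φ k else 0) (j - κ) J
    + F (j - κ) J
termination_by j
decreasing_by exact hk

lemma sol_solves (N κ : ℕ) (hκ : 1 ≤ κ) (m₀ : ℕ → ℝ) (m : Fin N → ℕ → ℝ) (ι : Type)
    [Fintype ι] (M : ι → MomentMonomial N κ) (A : ι → ℕ → (Fin N → ℕ) → ℂ)
    (F : ℕ → (Fin N → ℕ) → ℂ) (φ : Fin κ → (Fin N → ℕ) → ℂ) :
    SolvesEq N κ m₀ m ι M A F φ (sol N κ m₀ m ι M A F φ) := by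
  constructor
  · intro j
    rw [sol]
    rw [dif_pos j.isLt]
  · intro j
    rw [sol]
    have hj : ¬ (j + κ < κ) := by omega
    rw [dif_neg hj]
    have hc : j + κ - κ = j := by omega
    rw [hc]
    have := Papp_congr (N := N) (κ := κ) (m₀ := m₀) (m := m) (ι := ι) (M := M) (A := A)
      (U := fun k => if hk : k < j + κ then sol N κ m₀ m ι M A F φ k else 0)
      (V := sol N κ m₀ m ι M A F φ) (j := j)
      (fun k hk => dif_pos hk)
    rw [this]

lemma solves_uniq (N κ : ℕ) (m₀ : ℕ → ℝ) (m : Fin N → ℕ → ℝ) (ι : Type)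
    [Fintype ι] (M : ι → MomentMonomial N κ) (A : ι → ℕ → (Fin N → ℕ) → ℂ)
    (F : ℕ → (Fin N → ℕ) → ℂ) (φ : Fin κ → (Fin N → ℕ) → ℂ)
    {U V : ℕ → (Fin N → ℕ) → ℂ}
    (hU : SolvesEq N κ m₀ m ι M A F φ U) (hV : SolvesEq N κ m₀ m ι M A F φ V) : U = V := by
  funext j
  induction j using Nat.strong_induction_on with
  | _ j ih =>
    by_cases h : j < κ
    · have h1 := hU.1 ⟨j, h⟩
      have h2 := hV.1 ⟨j, h⟩
      simp only at h1 h2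
      rw [h1, h2]
    · have hj : j - κ + κ = j := by omega
      have h1 := hU.2 (j - κ)
      have h2 := hV.2 (j - κ)
      rw [hj] at h1 h2
      rw [h1, h2, Papp_congr (fun k hk => ih k (by omega))]
section Analytic

variable {N : ℕ} {ρ : Fin N → ℝ}

lemma analytic_zero : AnalyticCoeffs ρ (fun _ => (0 : ℂ)) := by
  intro r _ _
  simp only [norm_zero, zero_mul]
  exact summable_zero

lemma AnalyticCoeffs.add' {f g : (Fin N → ℕ) → ℂ} (hf : AnalyticCoeffs ρ f)
    (hg : AnalyticCoeffs ρ g) : AnalyticCoeffs ρ (fun J => f J + g J) := by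
  intro r h0 h1
  have hP : ∀ J : Fin N → ℕ, (0:ℝ) ≤ ∏ d, r d ^ J d := fun J =>
    Finset.prod_nonneg fun d _ => pow_nonneg (h0 d) _
  refine Summable.of_nonneg_of_le (fun J => mul_nonneg (norm_nonneg _) (hP J))
    (fun J => ?_) ((hf r h0 h1).add (hg r h0 h1))
  calc ‖f J + g J‖ * ∏ d, r d ^ J d
      ≤ (‖f J‖ + ‖g J‖) * ∏ d, r d ^ J d :=
        mul_le_mul_of_nonneg_right (norm_add_le _ _) (hP J)
    _ = ‖f J‖ * ∏ d, r d ^ J d + ‖g J‖ * ∏ d, r d ^ J d := by ring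

lemma AnalyticCoeffs.cmul {f : (Fin N → ℕ) → ℂ} (c : ℂ) (hf : AnalyticCoeffs ρ f) :
    AnalyticCoeffs ρ (fun J => c * f J) := by
  intro r h0 h1
  have := (hf r h0 h1).mul_left (‖c‖)
  refine this.congr fun J => ?_
  simp [norm_mul, mul_assoc]

lemma analytic_finsum {α : Type*} [DecidableEq α] {s : Finset α}
    {f : α → (Fin N → ℕ) → ℂ} (h : ∀ a ∈ s, AnalyticCoeffs ρ (f a)) :
    AnalyticCoeffs ρ (fun J => ∑ a ∈ s, f a J) := by
  induction s using Finset.induction_on with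
  | empty => simpa using (analytic_zero (ρ := ρ))
  | insert x s' hx ih =>
    simp only [Finset.sum_insert hx]
    exact (h x (Finset.mem_insert_self _ _)).add'
      (ih fun a ha => h a (Finset.mem_insert_of_mem ha))

lemma conv_summable {S T : (Fin N → ℕ) → ℝ} (hS : Summable S) (hT : Summable T)
    (hS0 : ∀ K, 0 ≤ S K) (hT0 : ∀ K, 0 ≤ T K) :
    Summable fun J : Fin N → ℕ => ∑ K ∈ Finset.Iic J, S K * T (J - K) := by
  have hprod : Summable fun p : (Fin N → ℕ) × (Fin N → ℕ) => S p.1 * T p.2 :=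
    hS.mul_of_nonneg hT hS0 hT0
  refine summable_of_sum_le (c := ∑' p : (Fin N → ℕ) × (Fin N → ℕ), S p.1 * T p.2)
    (fun J => Finset.sum_nonneg fun K _ => mul_nonneg (hS0 K) (hT0 _)) (fun u => ?_)
  rw [Finset.sum_sigma']
  have hinj : ∀ p ∈ u.sigma (fun J => Finset.Iic J), ∀ p' ∈ u.sigma (fun J => Finset.Iic J),
      (fun p : Σ _ : Fin N → ℕ, (Fin N → ℕ) => (p.2, p.1 - p.2)) p
        = (fun p : Σ _ : Fin N → ℕ, (Fin N → ℕ) => (p.2, p.1 - p.2)) p' → p = p' := by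
    rintro ⟨J, K⟩ hp ⟨J', K'⟩ hp' he
    simp only [Finset.mem_sigma, Finset.mem_Iic] at hp hp'
    simp only [Prod.mk.injEq] at he
    obtain ⟨h1, h2⟩ := he
    subst h1
    have hJ : J = J' := by
      funext d
      have e2 := congrFun h2 d
      simp only [Pi.sub_apply] at e2
      have e3 : K d ≤ J d := hp.2 d
      have e4 : K d ≤ J' d := hp'.2 d
      omega
    subst hJ; rfl
  have := Finset.sum_image (f := fun p : (Fin N → ℕ) × (Fin N → ℕ) => S p.1 * T p.2) hinj
  calc ∑ p ∈ u.sigma (fun J => Finset.Iic J), S p.2 * T (p.1 - p.2)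
      = ∑ p ∈ (u.sigma (fun J => Finset.Iic J)).image
          (fun p : Σ _ : Fin N → ℕ, (Fin N → ℕ) => (p.2, p.1 - p.2)),
          S p.1 * T p.2 := (this).symm
    _ ≤ ∑' p : (Fin N → ℕ) × (Fin N → ℕ), S p.1 * T p.2 :=
        Summable.sum_le_tsum _ (fun p _ => mul_nonneg (hS0 _) (hT0 _)) hprod

lemma AnalyticCoeffs.conv {f g : (Fin N → ℕ) → ℂ} (hf : AnalyticCoeffs ρ f)
    (hg : AnalyticCoeffs ρ g) : AnalyticCoeffs ρ (coeffMul f g) := by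
  intro r h0 h1
  have hS := hf r h0 h1
  have hT := hg r h0 h1
  have hP : ∀ J : Fin N → ℕ, (0:ℝ) ≤ ∏ d, r d ^ J d := fun J =>
    Finset.prod_nonneg fun d _ => pow_nonneg (h0 d) _
  refine Summable.of_nonneg_of_le (fun J => mul_nonneg (norm_nonneg _) (hP J))
    (fun J => ?_)
    (conv_summable hS hT (fun K => mul_nonneg (norm_nonneg _) (hP K))
      (fun K => mul_nonneg (norm_nonneg _) (hP K)))
  have hsplit : ∀ K ∈ Finset.Iic J, (∏ d, r d ^ J d)
      = (∏ d, r d ^ K d) * ∏ d, r d ^ (J - K) d := by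
    intro K hK
    rw [← Finset.prod_mul_distrib]
    refine Finset.prod_congr rfl fun d _ => ?_
    rw [← pow_add]
    congr 1
    have e3 : K d ≤ J d := (Finset.mem_Iic.mp hK) d
    simp only [Pi.sub_apply]
    omega
  calc ‖coeffMul f g J‖ * ∏ d, r d ^ J d
      ≤ (∑ K ∈ Finset.Iic J, ‖f K‖ * ‖g (J - K)‖) * ∏ d, r d ^ J d := by
        refine mul_le_mul_of_nonneg_right ?_ (hP J)
        refine le_trans (norm_sum_le _ _) ?_
        refine le_of_eq (Finset.sum_congr rfl fun K _ => ?_)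
        exact norm_mul _ _
    _ = ∑ K ∈ Finset.Iic J, (‖f K‖ * ∏ d, r d ^ K d)
          * (‖g (J - K)‖ * ∏ d, r d ^ (J - K) d) := by
        rw [Finset.sum_mul]
        refine Finset.sum_congr rfl fun K hK => ?_
        rw [hsplit K hK]; ring
    _ ≤ ∑ K ∈ Finset.Iic J, (‖f K‖ * ∏ d, r d ^ K d)
          * (‖g (J - K)‖ * ∏ d, r d ^ (J - K) d) := le_rfl

end Analytic
section MD

variable {N : ℕ} {ρ : Fin N → ℝ}

lemma summable_shifted_pow (k : ℕ) {x : ℝ} (h0 : 0 ≤ x) (h1 : x < 1) :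
    Summable fun n : ℕ => ((n : ℝ) + 1) ^ k * x ^ n := by
  have hx : ‖x‖ < 1 := by rwa [Real.norm_eq_abs, abs_of_nonneg h0]
  have key : ∀ n : ℕ, ((n : ℝ) + 1) ^ k * x ^ n
      = ∑ i ∈ Finset.range (k + 1), (n : ℝ) ^ i * x ^ n * (k.choose i : ℝ) := by
    intro n
    rw [add_pow, Finset.sum_mul]
    refine Finset.sum_congr rfl fun i _ => ?_
    ring
  refine Summable.congr ?_ fun n => (key n).symm
  refine summable_sum fun i _ => ?_
  exact (summable_pow_mul_geometric_of_norm_lt_one i hx).mul_right _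

lemma bounded_shifted_pow (k : ℕ) {x : ℝ} (h0 : 0 ≤ x) (h1 : x < 1) :
    ∃ c : ℝ, 0 ≤ c ∧ ∀ n : ℕ, ((n : ℝ) + 1) ^ k * x ^ n ≤ c := by
  have hsum := summable_shifted_pow k h0 h1
  refine ⟨∑' n : ℕ, ((n : ℝ) + 1) ^ k * x ^ n, tsum_nonneg fun n => by positivity, fun n => ?_⟩
  exact Summable.le_tsum hsum n fun m _ => by positivity

lemma ratio_bound {m : ℕ → ℝ} {s A : ℝ} (hm0 : ∀ j, 0 < m j)
    (hub : ∀ j : ℕ, m (j + 1) / m j ≤ A * ((j : ℝ) + 1) ^ s)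
    (hA0 : 0 < A) (hs0 : 0 ≤ s) {E : ℕ} (hE : s ≤ E) (q : ℕ) :
    ∀ j : ℕ, m (j + q) / m j ≤ (A * ((j : ℝ) + q + 1) ^ E) ^ q := by
  induction q with
  | zero =>
    intro j
    simp [div_self (hm0 j).ne']
  | succ q ih =>
    intro j
    push_cast
    have h1 : m (j + (q + 1)) / m j = (m (j + q + 1) / m (j + q)) * (m (j + q) / m j) := by
      have := (hm0 j).ne'
      have := (hm0 (j + q)).ne'
      field_simp
      ring_nf
    have hb1 : m (j + q + 1) / m (j + q) ≤ A * ((j : ℝ) + (q + 1) + 1) ^ E := by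
      refine le_trans (hub (j + q)) ?_
      have hbase : ((j + q : ℕ) : ℝ) + 1 = (j : ℝ) + q + 1 := by push_cast; ring
      rw [hbase]
      refine mul_le_mul_of_nonneg_left ?_ hA0.le
      have c1 : ((j : ℝ) + q + 1) ^ s ≤ ((j : ℝ) + (q + 1) + 1) ^ s :=
        Real.rpow_le_rpow (by positivity) (by push_cast; linarith) hs0
      have c2 : ((j : ℝ) + (q + 1) + 1) ^ s ≤ ((j : ℝ) + (q + 1) + 1) ^ (E : ℝ) :=
        Real.rpow_le_rpow_of_exponent_le (by push_cast; linarith [Nat.cast_nonneg (α := ℝ) j, Nat.cast_nonneg (α := ℝ) q]) hE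
      calc ((j : ℝ) + q + 1) ^ s ≤ ((j : ℝ) + (q + 1) + 1) ^ (E : ℝ) := le_trans c1 c2
        _ = ((j : ℝ) + (q + 1) + 1) ^ E := Real.rpow_natCast _ _
    have hb2 : (A * ((j : ℝ) + q + 1) ^ E) ^ q ≤ (A * ((j : ℝ) + (q + 1) + 1) ^ E) ^ q := by
      refine pow_le_pow_left₀ (by positivity) ?_ q
      refine mul_le_mul_of_nonneg_left ?_ hA0.le
      exact pow_le_pow_left₀ (by positivity) (by push_cast; linarith) E
    have hpos1 : 0 < m (j + q + 1) / m (j + q) := div_pos (hm0 _) (hm0 _)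
    have hpos2 : 0 ≤ m (j + q) / m j := (div_pos (hm0 _) (hm0 _)).le
    calc m (j + (q + 1)) / m j
        = (m (j + q + 1) / m (j + q)) * (m (j + q) / m j) := h1
      _ ≤ (A * ((j : ℝ) + (q + 1) + 1) ^ E) * (A * ((j : ℝ) + (q + 1) + 1) ^ E) ^ q := by
          refine mul_le_mul hb1 (le_trans (ih j) hb2) hpos2 ?_
          positivity
      _ = (A * ((j : ℝ) + (q + 1) + 1) ^ E) ^ (q + 1) := (pow_succ' _ _).symm

lemma momentDerivQ_analytic (hρ : ∀ d, 0 < ρ d) {s : Fin N → ℝ}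
    (hs : ∀ d, 0 ≤ s d) {m : Fin N → ℕ → ℝ} (hm : ∀ d, IsRegularMomentSeq (m d) (s d))
    (q : Fin N → ℕ) {f : (Fin N → ℕ) → ℂ} (hf : AnalyticCoeffs ρ f) :
    AnalyticCoeffs ρ (momentDerivQ m q f) := by
  intro r h0 h1
  set r' : Fin N → ℝ := fun d => (r d + ρ d) / 2 with hr'def
  have hr'0 : ∀ d, 0 < r' d := fun d => by
    have := h0 d; have := hρ d; simp only [hr'def]; linarith
  have hr'lt : ∀ d, r' d < ρ d := fun d => by
    have := h1 d; simp only [hr'def]; linarith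
  have hrlt : ∀ d, r d < r' d := fun d => by
    have := h1 d; simp only [hr'def]; linarith
  have hsum := hf r' (fun d => (hr'0 d).le) hr'lt
  -- shifted summability
  have hinj : Function.Injective (fun J : Fin N → ℕ => J + q) := by
    intro a b hab
    funext d
    have := congrFun hab d
    simp only [Pi.add_apply] at this
    omega
  have hshift : Summable fun J : Fin N → ℕ =>
      ‖f (J + q)‖ * ∏ d, r' d ^ (J d + q d) := by
    have h := hsum.comp_injective hinj
    refine h.congr fun J => ?_
    simp only [Function.comp_apply, Pi.add_apply]
  -- per-coordinate constants
  have hconst : ∀ d : Fin N, ∃ C : ℝ, 0 ≤ C ∧ ∀ n : ℕ,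
      (m d (n + q d) / m d n) * r d ^ n ≤ C * r' d ^ (n + q d) := by
    intro d
    obtain ⟨hm1, hmpos, a, A, ha0, hA0, hbd⟩ := hm d
    set E : ℕ := ⌈s d⌉₊ with hE
    have hEs : s d ≤ (E : ℝ) := Nat.le_ceil _
    have hub : ∀ j : ℕ, m d (j + 1) / m d j ≤ A * ((j : ℝ) + 1) ^ (s d) :=
      fun j => (hbd j).2
    have hrb := ratio_bound hmpos hub hA0 (hs d) hEs (q d)
    set x : ℝ := r d / r' d with hx
    have hx0 : 0 ≤ x := div_nonneg (h0 d) (hr'0 d).le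
    have hx1 : x < 1 := (div_lt_one (hr'0 d)).mpr (hrlt d)
    obtain ⟨c, hc0, hc⟩ := bounded_shifted_pow (E * q d) hx0 hx1
    have hrd : 0 < r' d := hr'0 d
    have hrd0 : 0 ≤ r d := h0 d
    refine ⟨A ^ q d * ((q d : ℝ) + 1) ^ (E * q d) * c / r' d ^ q d, by positivity, fun n => ?_⟩
    have hr1 : r d ^ n = x ^ n * r' d ^ n := by
      rw [hx, div_pow, div_mul_eq_mul_div, mul_div_assoc, div_self (by positivity), mul_one]
    have step1 : m d (n + q d) / m d n ≤ A ^ q d * ((n : ℝ) + q d + 1) ^ (E * q d) := by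
      refine le_trans (hrb n) ?_
      rw [mul_pow, pow_mul]
    have step2 : ((n : ℝ) + q d + 1) ^ (E * q d)
        ≤ ((q d : ℝ) + 1) ^ (E * q d) * ((n : ℝ) + 1) ^ (E * q d) := by
      rw [← mul_pow]
      refine pow_le_pow_left₀ (by positivity) ?_ _
      have : (0:ℝ) ≤ (q d : ℝ) * n := by positivity
      nlinarith [Nat.cast_nonneg (α := ℝ) n, Nat.cast_nonneg (α := ℝ) (q d)]
    have step3 : ((n : ℝ) + 1) ^ (E * q d) * x ^ n ≤ c := hc n
    have hrpos : (0:ℝ) < r' d ^ q d := by positivity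
    have lhs_nonneg : 0 ≤ m d (n + q d) / m d n := (div_pos (hmpos _) (hmpos _)).le
    calc (m d (n + q d) / m d n) * r d ^ n
        = (m d (n + q d) / m d n) * (x ^ n * r' d ^ n) := by rw [hr1]
      _ ≤ (A ^ q d * ((n : ℝ) + q d + 1) ^ (E * q d)) * (x ^ n * r' d ^ n) := by
          refine mul_le_mul_of_nonneg_right step1 ?_
          positivity
      _ ≤ (A ^ q d * (((q d : ℝ) + 1) ^ (E * q d) * ((n : ℝ) + 1) ^ (E * q d)))
            * (x ^ n * r' d ^ n) := by
          refine mul_le_mul_of_nonneg_right (mul_le_mul_of_nonneg_left step2 (by positivity)) ?_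
          positivity
      _ = (A ^ q d * ((q d : ℝ) + 1) ^ (E * q d) * r' d ^ n)
            * (((n : ℝ) + 1) ^ (E * q d) * x ^ n) := by ring
      _ ≤ (A ^ q d * ((q d : ℝ) + 1) ^ (E * q d) * r' d ^ n) * c := by
          refine mul_le_mul_of_nonneg_left step3 ?_
          positivity
      _ = (A ^ q d * ((q d : ℝ) + 1) ^ (E * q d) * c / r' d ^ q d) * r' d ^ (n + q d) := by
          rw [pow_add]
          field_simp
  choose C hC0 hC using hconst
  -- comparison
  have hP : ∀ J : Fin N → ℕ, (0:ℝ) ≤ ∏ d, r d ^ J d := fun J =>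
    Finset.prod_nonneg fun d _ => pow_nonneg (h0 d) _
  refine Summable.of_nonneg_of_le (fun J => mul_nonneg (norm_nonneg _) (hP J))
    (fun J => ?_) (hshift.mul_left (∏ d, C d))
  have hmpos : ∀ d, ∀ j, 0 < m d j := fun d => (hm d).2.1
  have hRpos : ∀ J : Fin N → ℕ, (0:ℝ) ≤ ∏ d, m d (J d + q d) / m d (J d) := fun J =>
    Finset.prod_nonneg fun d _ => (div_pos (hmpos d _) (hmpos d _)).le
  have habs : ‖momentDerivQ m q f J‖
      = ‖f (J + q)‖ * ∏ d, m d (J d + q d) / m d (J d) := by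
    unfold momentDerivQ
    rw [norm_mul, Complex.norm_real, Real.norm_of_nonneg (hRpos J)]
  rw [habs]
  have key : (∏ d, m d (J d + q d) / m d (J d)) * ∏ d, r d ^ J d
      ≤ (∏ d, C d) * ∏ d, r' d ^ (J d + q d) := by
    rw [← Finset.prod_mul_distrib, ← Finset.prod_mul_distrib]
    refine Finset.prod_le_prod (fun d _ => ?_) (fun d _ => hC d (J d))
    exact mul_nonneg (div_pos (hmpos d _) (hmpos d _)).le (pow_nonneg (h0 d) _)
  calc ‖f (J + q)‖ * (∏ d, m d (J d + q d) / m d (J d)) * ∏ d, r d ^ J d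
      = ‖f (J + q)‖ * ((∏ d, m d (J d + q d) / m d (J d)) * ∏ d, r d ^ J d) := by
        ring
    _ ≤ ‖f (J + q)‖ * ((∏ d, C d) * ∏ d, r' d ^ (J d + q d)) :=
        mul_le_mul_of_nonneg_left key (norm_nonneg _)
    _ = (∏ d, C d) * (‖f (J + q)‖ * ∏ d, r' d ^ (J d + q d)) := by ring

end MD
section Struct

variable {N : ℕ} {ρ : Fin N → ℝ}

lemma sOne_analytic (j : ℕ) : AnalyticCoeffs ρ (sOne N j) := by
  intro r _ _
  refine summable_of_ne_finset_zero (s := {(0 : Fin N → ℕ)}) fun J hJ => ?_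
  simp only [Finset.mem_singleton] at hJ
  simp [sOne, hJ]

lemma tpowMul_analytic {m₀ : ℕ → ℝ} {v j : ℕ} {U : ℕ → (Fin N → ℕ) → ℂ}
    (hU : ∀ k, AnalyticCoeffs ρ (U k)) : AnalyticCoeffs ρ (tpowMul N m₀ v U j) := by
  unfold tpowMul
  by_cases h : v ≤ j
  · simp only [if_pos h]
    exact (hU (j - v)).cmul _
  · simp only [if_neg h]
    exact analytic_zero

lemma tmul_analytic {m₀ : ℕ → ℝ} {U V : ℕ → (Fin N → ℕ) → ℂ}
    (hU : ∀ k, AnalyticCoeffs ρ (U k)) (hV : ∀ k, AnalyticCoeffs ρ (V k)) (j : ℕ) :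
    AnalyticCoeffs ρ (tmul N m₀ U V j) := by
  unfold tmul
  exact analytic_finsum fun k _ => ((hU k).conv (hV (j - k))).cmul _

lemma sProd_analytic {m₀ : ℕ → ℝ} :
    ∀ (n : ℕ) (F : Fin n → ℕ → (Fin N → ℕ) → ℂ),
      (∀ ℓ k, AnalyticCoeffs ρ (F ℓ k)) → ∀ j, AnalyticCoeffs ρ (sProd N m₀ n F j) := by
  intro n
  induction n with
  | zero => intro F _ j; exact sOne_analytic j
  | succ n ih =>
    intro F hF j
    exact tmul_analytic (hF 0) (fun k => ih _ (fun ℓ k' => hF ℓ.succ k') k) j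

lemma spow_analytic {m₀ : ℕ → ℝ} (p : ℕ) {U : ℕ → (Fin N → ℕ) → ℂ}
    (hU : ∀ k, AnalyticCoeffs ρ (U k)) (j : ℕ) : AnalyticCoeffs ρ (spow N m₀ p U j) :=
  sProd_analytic p _ (fun _ k => hU k) j

lemma Papp_analytic {κ : ℕ} {m₀ : ℕ → ℝ} {m : Fin N → ℕ → ℝ} {ι : Type} [Fintype ι]
    {M : ι → MomentMonomial N κ} {A : ι → ℕ → (Fin N → ℕ) → ℂ}
    {U : ℕ → (Fin N → ℕ) → ℂ} (hρ : ∀ d, 0 < ρ d) {s : Fin N → ℝ} (hs : ∀ d, 0 ≤ s d)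
    (hm : ∀ d, IsRegularMomentSeq (m d) (s d))
    (hA : ∀ τ k, AnalyticCoeffs ρ (A τ k)) (hU : ∀ k, AnalyticCoeffs ρ (U k)) (j : ℕ) :
    AnalyticCoeffs ρ (Papp N κ m₀ m ι M A U j) := by
  unfold Papp
  classical
  refine analytic_finsum fun τ _ => ?_
  refine tpowMul_analytic fun k => ?_
  refine tmul_analytic (hA τ) (fun k' => ?_) k
  refine sProd_analytic _ _ (fun ℓ k'' => ?_) k'
  refine spow_analytic _ (fun k₃ => ?_) k''
  exact momentDerivQ_analytic hρ hs hm _ (hU (k₃ + (M τ).i ℓ))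

lemma A_slice_analytic {ρ₀ : ℝ} (hρ₀ : 0 < ρ₀) {m₀ : ℕ → ℝ} (hm₀ : ∀ j, 0 < m₀ j)
    {A : ℕ → (Fin N → ℕ) → ℂ}
    (hA : ∀ (r₀ : ℝ) (r : Fin N → ℝ), 0 ≤ r₀ → r₀ < ρ₀ →
      (∀ d, 0 ≤ r d) → (∀ d, r d < ρ d) →
      Summable fun p : ℕ × (Fin N → ℕ) =>
        ‖A p.1 p.2‖ / m₀ p.1 * r₀ ^ p.1 * ∏ d, r d ^ p.2 d)
    (j : ℕ) : AnalyticCoeffs ρ (A j) := by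
  intro r h0 h1
  have h := hA (ρ₀ / 2) r (by positivity) (by linarith) h0 h1
  have hinj : Function.Injective (fun J : Fin N → ℕ => ((j, J) : ℕ × (Fin N → ℕ))) := by
    intro a b hab
    simpa using congrArg Prod.snd hab
  have h2 := h.comp_injective hinj
  simp only [Function.comp_def] at h2
  have hne1 : m₀ j ≠ 0 := (hm₀ j).ne'
  have hne2 : ((ρ₀ / 2) ^ j : ℝ) ≠ 0 := by positivity
  refine (h2.mul_left (m₀ j / (ρ₀ / 2) ^ j)).congr fun J => ?_
  field_simp

end Struct

/-- Formal well-posedness: under the standing assumptions (regular moment sequences, analytic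
coefficients `a_τ` with `a_τ(0,x) ≢ 0`, analytic inhomogeneity and initial data, pairwise
distinct pairs `(i_k,q_k)` inside each monomial, and the Assumption
`Σ rℓ iℓ − v_τ < κ`), the Cauchy problem admits a unique formal power series solution
`ũ = Σ_j u_j(x) t^j/m₀(j)`, and all the coefficients `u_j` of this solution are analytic on
the full polydisc `D_{ρ₁,...,ρ_N}`. -/
theorem formally_well_posed (N κ : ℕ) (hN : 1 ≤ N) (hκ : 1 ≤ κ)
    (ρ₀ : ℝ) (hρ₀ : 0 < ρ₀) (ρ : Fin N → ℝ) (hρ : ∀ d, 0 < ρ d)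
    (s₀ : ℝ) (hs₀ : 0 < s₀) (m₀ : ℕ → ℝ) (hm₀ : IsRegularMomentSeq m₀ s₀)
    (s : Fin N → ℝ) (hs : ∀ d, 1 ≤ s d)
    (m : Fin N → ℕ → ℝ) (hm : ∀ d, IsRegularMomentSeq (m d) (s d))
    (ι : Type) [Fintype ι] [Nonempty ι] (M : ι → MomentMonomial N κ)
    (hdist : ∀ τ, ∀ k k' : Fin (M τ).n, k ≠ k' →
      ((M τ).i k, (M τ).q k) ≠ ((M τ).i k', (M τ).q k'))
    (A : ι → ℕ → (Fin N → ℕ) → ℂ)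
    (hA : ∀ τ, ∀ (r₀ : ℝ) (r : Fin N → ℝ), 0 ≤ r₀ → r₀ < ρ₀ →
      (∀ d, 0 ≤ r d) → (∀ d, r d < ρ d) →
      Summable fun p : ℕ × (Fin N → ℕ) =>
        ‖A τ p.1 p.2‖ / m₀ p.1 * r₀ ^ p.1 * ∏ d, r d ^ p.2 d)
    (hA0 : ∀ τ, A τ 0 ≠ 0)
    (F : ℕ → (Fin N → ℕ) → ℂ) (hF : ∀ j, AnalyticCoeffs ρ (F j))
    (φ : Fin κ → (Fin N → ℕ) → ℂ) (hφ : ∀ j, AnalyticCoeffs ρ (φ j))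
    (hass : ∀ τ, (∑ ℓ, (M τ).r ℓ * (M τ).i ℓ) < κ + (M τ).v) :
    (∃! U : ℕ → (Fin N → ℕ) → ℂ, SolvesEq N κ m₀ m ι M A F φ U) ∧
    (∀ U : ℕ → (Fin N → ℕ) → ℂ, SolvesEq N κ m₀ m ι M A F φ U →
      ∀ j, AnalyticCoeffs ρ (U j)) := by
  constructor
  · exact ⟨sol N κ m₀ m ι M A F φ, sol_solves N κ hκ m₀ m ι M A F φ,
      fun V hV => solves_uniq N κ m₀ m ι M A F φ hV (sol_solves N κ hκ m₀ m ι M A F φ)⟩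
  · intro U hU j
    have hAan : ∀ τ k, AnalyticCoeffs ρ (A τ k) := fun τ k =>
      A_slice_analytic hρ₀ hm₀.2.1 (hA τ) k
    have hs' : ∀ d, 0 ≤ s d := fun d => le_trans zero_le_one (hs d)
    induction j using Nat.strong_induction_on with
    | _ j ih =>
      by_cases h : j < κ
      · have h1 := hU.1 ⟨j, h⟩
        simp only at h1
        rw [h1]
        exact hφ _
      · classical
        have hj : j - κ + κ = j := by omega
        have h1 := hU.2 (j - κ)
        rw [hj] at h1
        set V : ℕ → (Fin N → ℕ) → ℂ := fun k => if k < j then U k else 0 with hV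
        have hVan : ∀ k, AnalyticCoeffs ρ (V k) := by
          intro k
          simp only [hV]
          by_cases hk : k < j
          · simp only [if_pos hk]; exact ih k hk
          · simp only [if_neg hk]; exact analytic_zero
        have hPeq : Papp N κ m₀ m ι M A U (j - κ) = Papp N κ m₀ m ι M A V (j - κ) := by
          refine Papp_congr fun k hk => ?_
          simp only [hV]
          rw [if_pos (by omega)]
        rw [h1, hPeq]
        exact (Papp_analytic hρ hs' hm hAan hVan (j - κ)).add' (hF (j - κ))
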